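/- Let G be a finite abelian group, k a positive integer. With η^x_w := |{b ∈ {0,1}^k : b · x = w}|, the second moment satisfies (1/|G|^{k+1}) ∑_{x ∈ G^k, w ∈ G} (η^x_w)² = 2^k/|G| + 2^k(2^k − 1)/|G|². -/
import Mathlib

open Finset

lemma count_pair_aux {G : Type*} [AddCommGroup G] [Fintype G] [DecidableEq G] {k : ℕ}
    (b c : Finset (Fin k)) (hbc : b ≠ c) :
    Fintype.card G * (Finset.univ.filter
      (fun x : Fin k → G => ∑ i ∈ b, x i = ∑ i ∈ c, x i)).card
      = Fintype.card G ^ k := by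
  classical
  set f : (Fin k → G) →+ G :=
    AddMonoidHom.mk' (fun x => ∑ i ∈ b, x i - ∑ i ∈ c, x i)
      (fun x y => by simp [Finset.sum_add_distrib]; abel) with hf
  obtain ⟨j, hj⟩ : ∃ j, (j ∈ b ∧ j ∉ c) ∨ (j ∈ c ∧ j ∉ b) := by
    by_contra h
    push_neg at h
    apply hbc
    ext j
    rcases h j with ⟨h1, h2⟩
    exact ⟨fun hb => by by_contra hc; exact hc (h1 hb),
           fun hc => by by_contra hb; exact hb (h2 hc)⟩
  have hsurj : Function.Surjective f := by
    intro g
    rcases hj with ⟨hjb, hjc⟩ | ⟨hjc, hjb⟩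
    · refine ⟨Pi.single j g, ?_⟩
      simp [hf, Pi.single_apply, Finset.sum_ite_eq', hjb, hjc]
    · refine ⟨Pi.single j (-g), ?_⟩
      simp [hf, Pi.single_apply, Finset.sum_ite_eq', hjb, hjc]
  have hquot : Nat.card ((Fin k → G) ⧸ f.ker) = Fintype.card G :=
    (Nat.card_congr (QuotientAddGroup.quotientKerEquivOfSurjective f hsurj).toEquiv).trans
      Nat.card_eq_fintype_card
  have hker : Nat.card f.ker = (Finset.univ.filter
      (fun x : Fin k → G => ∑ i ∈ b, x i = ∑ i ∈ c, x i)).card := by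
    rw [Nat.card_eq_fintype_card, Fintype.card_subtype]
    congr 1
    apply Finset.filter_congr
    intro x _
    simp [hf, AddMonoidHom.mem_ker, sub_eq_zero]
  have htot := AddSubgroup.card_eq_card_quotient_mul_card_addSubgroup f.ker
  rw [hquot, hker] at htot
  rw [← htot]
  simp [Nat.card_eq_fintype_card]

/-- Second moment of the subset-sum solution count `η^x_w` over a finite abelian group:
`(1/|G|^{k+1}) ∑_{x,w} (η^x_w)² = 2^k/|G| + 2^k(2^k − 1)/|G|²`. -/
theorem subset_sum_count_second_moment
    {G : Type*} [AddCommGroup G] [Fintype G] [DecidableEq G] (k : ℕ) (hk : 0 < k) :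
    ((Fintype.card G : ℚ) ^ (k + 1))⁻¹ *
        ∑ x : Fin k → G, ∑ w : G,
          (((Finset.univ.filter (fun b : Finset (Fin k) => ∑ i ∈ b, x i = w)).card : ℚ)) ^ 2
      = 2 ^ k / (Fintype.card G : ℚ)
        + 2 ^ k * (2 ^ k - 1) / (Fintype.card G : ℚ) ^ 2 := by
  classical
  have hN0 : 0 < Fintype.card G := Fintype.card_pos
  set N : ℚ := (Fintype.card G : ℚ) with hNdef
  have hN : (0:ℚ) < N := by rw [hNdef]; exact_mod_cast hN0
  have step1 : ∀ x : Fin k → G,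
      ∑ w : G, (((Finset.univ.filter
          (fun b : Finset (Fin k) => ∑ i ∈ b, x i = w)).card : ℚ)) ^ 2
      = ∑ b : Finset (Fin k), ∑ c : Finset (Fin k),
          (if ∑ i ∈ b, x i = ∑ i ∈ c, x i then (1:ℚ) else 0) := by
    intro x
    have hcard : ∀ w : G,
        (((Finset.univ.filter (fun b : Finset (Fin k) => ∑ i ∈ b, x i = w)).card : ℚ))
        = ∑ b : Finset (Fin k), (if ∑ i ∈ b, x i = w then (1:ℚ) else 0) := by
      intro w
      rw [Finset.card_filter]
      push_cast
      rfl
    calc ∑ w : G, (((Finset.univ.filter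
            (fun b : Finset (Fin k) => ∑ i ∈ b, x i = w)).card : ℚ)) ^ 2
        = ∑ w : G, ∑ b : Finset (Fin k), ∑ c : Finset (Fin k),
            ((if ∑ i ∈ b, x i = w then (1:ℚ) else 0) *
             (if ∑ i ∈ c, x i = w then (1:ℚ) else 0)) := by
          refine Finset.sum_congr rfl fun w _ => ?_
          rw [sq, hcard w, Finset.sum_mul_sum]
      _ = ∑ b : Finset (Fin k), ∑ c : Finset (Fin k), ∑ w : G,
            ((if ∑ i ∈ b, x i = w then (1:ℚ) else 0) *
             (if ∑ i ∈ c, x i = w then (1:ℚ) else 0)) := by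
          rw [Finset.sum_comm]
          refine Finset.sum_congr rfl fun b _ => Finset.sum_comm
      _ = ∑ b : Finset (Fin k), ∑ c : Finset (Fin k),
            (if ∑ i ∈ b, x i = ∑ i ∈ c, x i then (1:ℚ) else 0) := by
          refine Finset.sum_congr rfl fun b _ => Finset.sum_congr rfl fun c _ => ?_
          rw [Finset.sum_eq_single (∑ i ∈ b, x i)]
          · simp [eq_comm]
          · intro w _ hw
            simp [Ne.symm hw]
          · simp
  rw [Finset.sum_congr rfl fun x _ => step1 x, Finset.sum_comm]
  have hswap : ∑ b : Finset (Fin k), ∑ x : Fin k → G, ∑ c : Finset (Fin k),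
      (if ∑ i ∈ b, x i = ∑ i ∈ c, x i then (1:ℚ) else 0)
      = ∑ b : Finset (Fin k), ∑ c : Finset (Fin k), ∑ x : Fin k → G,
      (if ∑ i ∈ b, x i = ∑ i ∈ c, x i then (1:ℚ) else 0) :=
    Finset.sum_congr rfl fun b _ => Finset.sum_comm
  rw [hswap]
  have step2 : ∀ b c : Finset (Fin k),
      ∑ x : Fin k → G, (if ∑ i ∈ b, x i = ∑ i ∈ c, x i then (1:ℚ) else 0)
      = if b = c then N ^ k else N ^ k / N := by
    intro b c
    rw [Finset.sum_boole]
    by_cases hbc : b = c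
    · subst hbc
      simp [hNdef, Fintype.card_pi]
    · rw [if_neg hbc, eq_div_iff hN.ne', hNdef, mul_comm]
      exact_mod_cast count_pair_aux b c hbc
  rw [Finset.sum_congr rfl fun b _ => Finset.sum_congr rfl fun c _ => step2 b c]
  have inner : ∀ b : Finset (Fin k), ∑ c : Finset (Fin k),
      (if b = c then N ^ k else N ^ k / N)
      = 2 ^ k * (N ^ k / N) + (N ^ k - N ^ k / N) := by
    intro b
    have h1 : ∀ c : Finset (Fin k), (if b = c then N ^ k else N ^ k / N)
        = N ^ k / N + (if b = c then N ^ k - N ^ k / N else 0) := by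
      intro c; split_ifs <;> ring
    rw [Finset.sum_congr rfl fun c _ => h1 c, Finset.sum_add_distrib,
      Finset.sum_const, Finset.sum_ite_eq, if_pos (Finset.mem_univ b)]
    simp [Fintype.card_finset]
  rw [Finset.sum_congr rfl fun b _ => inner b, Finset.sum_const]
  simp only [Finset.card_univ, Fintype.card_finset, Fintype.card_fin, nsmul_eq_mul]
  push_cast
  field_simp
  ring
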